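/- There are exactly n^{n-2} labeled trees on n vertices, for n >= 2 (Cayley's formula). -/

import Mathlib

open Function Finset

namespace CayleyAux

variable {n : ℕ}

/-- Parent maps on `Fin n` rooted at `b`. -/
def Rooted (n : ℕ) (b : Fin n) : Type :=
  {p : Fin n → Fin n // p b = b ∧ ∀ v, ∃ k, p^[k] v = b}

/-- Functions fixing exactly `S`, with every point eventually in `S`. -/
def Forests (n : ℕ) (S : Finset (Fin n)) : Type :=
  {g : Fin n → Fin n // (∀ v, g v = v ↔ v ∈ S) ∧ ∀ v, ∃ k, g^[k] v ∈ S}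

def Code (n : ℕ) : Type :=
  Σ S : Finset (Fin n), Equiv.Perm {x // x ∈ S} × Forests n S

/-- iterates agree until entering `S`. -/
lemma until_mem {S : Finset (Fin n)} {f p : Fin n → Fin n}
    (hfp : ∀ v, v ∉ S → p v = f v) :
    ∀ (k : ℕ) (v : Fin n), f^[k] v ∈ S → ∃ m, p^[m] v ∈ S := by
  intro k
  induction k with
  | zero => intro v hv; exact ⟨0, hv⟩
  | succ k ih =>
    intro v hv
    by_cases h : v ∈ S
    · exact ⟨0, h⟩
    · rw [iterate_succ_apply] at hv
      obtain ⟨m, hm⟩ := ih (f v) hv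
      exact ⟨m + 1, by rwa [iterate_add_apply, iterate_one, hfp v h]⟩

noncomputable def cyc (f : Fin n → Fin n) : Finset (Fin n) :=
  @Finset.filter _ (fun v => ∃ k, 0 < k ∧ f^[k] v = v) (Classical.decPred _) Finset.univ

lemma mem_cyc {f : Fin n → Fin n} {v : Fin n} :
    v ∈ cyc f ↔ ∃ k, 0 < k ∧ f^[k] v = v := by
  rw [cyc]
  exact (@Finset.mem_filter _ _ (Classical.decPred _) _ _).trans (by simp)

lemma apply_mem_cyc {f : Fin n → Fin n} {v : Fin n} (hv : v ∈ cyc f) : f v ∈ cyc f := by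
  rw [mem_cyc] at hv ⊢
  obtain ⟨k, hk, hkv⟩ := hv
  exact ⟨k, hk, by rw [← iterate_succ_apply, iterate_succ_apply', hkv]⟩

lemma exists_iterate_mem_cyc (f : Fin n → Fin n) (v : Fin n) : ∃ k, f^[k] v ∈ cyc f := by
  obtain ⟨i, j, hne, hij⟩ := Finite.exists_ne_map_eq_of_infinite (fun k : ℕ => f^[k] v)
  wlog hlt : i < j generalizing i j
  · exact this j i hne.symm hij.symm (by omega)
  refine ⟨i, mem_cyc.2 ⟨j - i, by omega, ?_⟩⟩
  rw [← iterate_add_apply, Nat.sub_add_cancel hlt.le]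
  exact hij.symm

lemma cyc_injOn {f : Fin n → Fin n} {a b : Fin n} (ha : a ∈ cyc f) (hb : b ∈ cyc f)
    (h : f a = f b) : a = b := by
  rw [mem_cyc] at ha hb
  obtain ⟨ka, hka, hia⟩ := ha
  obtain ⟨kb, hkb, hib⟩ := hb
  have hma : f^[ka * kb] a = a := by rw [iterate_mul]; exact iterate_fixed hia kb
  have hmb : f^[ka * kb] b = b := by
    rw [mul_comm, iterate_mul]; exact iterate_fixed hib ka
  have hm1 : ka * kb = (ka * kb - 1) + 1 := by
    have : 0 < ka * kb := Nat.mul_pos hka hkb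
    omega
  rw [hm1, iterate_succ_apply] at hma hmb
  rw [← hma, ← hmb, h]

noncomputable def cycPerm (f : Fin n → Fin n) : Equiv.Perm {x // x ∈ cyc f} := by
  refine Equiv.ofBijective (fun v => ⟨f v.1, apply_mem_cyc v.2⟩) ?_
  rw [← Finite.injective_iff_bijective]
  intro a b hab
  exact Subtype.ext (cyc_injOn a.2 b.2 (by simpa [Subtype.ext_iff] using hab))

lemma coe_cycPerm (f : Fin n → Fin n) (v : {x // x ∈ cyc f}) :
    (cycPerm f v : Fin n) = f v := rfl

/-- E1: endofunctions are coded by (cyclic set, permutation of it, attached forest). -/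
noncomputable def E1 (n : ℕ) : (Fin n → Fin n) ≃ Code n where
  toFun f := ⟨cyc f, cycPerm f, ⟨fun v => if v ∈ cyc f then v else f v, by
      constructor
      · intro v
        by_cases h : v ∈ cyc f
        · simp [h]
        · simp only [if_neg h]
          refine ⟨fun hv => absurd (mem_cyc.2 ⟨1, one_pos, by simpa using hv⟩) h, fun hv => absurd hv h⟩
      · intro v
        obtain ⟨k, hk⟩ := exists_iterate_mem_cyc f v
        exact until_mem (fun v hv => by simp [if_neg hv]) k v hk⟩⟩
  invFun := fun ⟨S, σ, g⟩ => fun v => if h : v ∈ S then (σ ⟨v, h⟩ : Fin n) else g.1 v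
  left_inv f := by
    funext v
    by_cases h : v ∈ cyc f
    · simp [dif_pos h, coe_cycPerm]
    · simp [dif_neg h, if_neg h]
  right_inv := by
    rintro ⟨S, σ, g⟩
    obtain ⟨g, hgfix, hgev⟩ := g
    have key : ∀ f : Fin n → Fin n, cyc f = S →
        (∀ (v) (h : v ∈ S), f v = (σ ⟨v, h⟩ : Fin n)) → (∀ v ∉ S, f v = g v) →
        (⟨cyc f, cycPerm f, ⟨fun v => if v ∈ cyc f then v else f v, by
          constructor
          · intro v
            by_cases h : v ∈ cyc f
            · simp [h]
            · simp only [if_neg h]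
              refine ⟨fun hv => absurd (mem_cyc.2 ⟨1, one_pos, by simpa using hv⟩) h,
                fun hv => absurd hv h⟩
          · intro v
            obtain ⟨k, hk⟩ := exists_iterate_mem_cyc f v
            exact until_mem (fun v hv => by simp [if_neg hv]) k v hk⟩⟩ : Code n) = ⟨S, σ, ⟨g, hgfix, hgev⟩⟩ := by
      intro f h1 h2 h3
      subst h1
      refine Sigma.ext rfl (heq_of_eq (Prod.ext ?_ ?_))
      · refine Equiv.ext fun v => Subtype.ext ?_
        rw [coe_cycPerm, h2 v.1 v.2]
      · refine Subtype.ext (funext fun v => ?_)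
        by_cases h : v ∈ cyc f
        · simp only [if_pos h]
          exact ((hgfix v).2 h).symm
        · simp only [if_neg h]
          exact h3 v h
    set f : Fin n → Fin n := fun v => if h : v ∈ S then (σ ⟨v, h⟩ : Fin n) else g v with hf
    have hfS : ∀ (v) (h : v ∈ S), f v = (σ ⟨v, h⟩ : Fin n) := fun v h => dif_pos h
    have hfg : ∀ v, v ∉ S → f v = g v := fun v h => dif_neg h
    have hiter : ∀ (k : ℕ) (v : Fin n) (h : v ∈ S), f^[k] v = ((σ ^ k) ⟨v, h⟩ : Fin n) := by
      intro k
      induction k with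
      | zero => intro v h; simp
      | succ k ih =>
        intro v h
        rw [iterate_succ_apply, hfS v h, ih _ (σ ⟨v, h⟩).2]
        have h5 : (⟨(σ ⟨v, h⟩ : Fin n), (σ ⟨v, h⟩).2⟩ : {x // x ∈ S}) = σ ⟨v, h⟩ := rfl
        rw [h5, pow_succ]
        rfl
    have hSclosed : ∀ (k : ℕ) (v : Fin n), v ∈ S → f^[k] v ∈ S := by
      intro k v h
      rw [hiter k v h]
      exact ((σ ^ k) ⟨v, h⟩).2
    have hS : cyc f = S := by
      ext v
      constructor
      · intro hv
        obtain ⟨k, hk, hkv⟩ := mem_cyc.1 hv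
        by_contra hvS
        obtain ⟨m, hm⟩ : ∃ m, f^[m] v ∈ S := by
          obtain ⟨m, hm⟩ := hgev v
          exact until_mem (fun w hw => (hfg w hw)) m v hm
        have h1 : f^[k * (m + 1)] v ∈ S := by
          have hle : m + 1 ≤ k * (m + 1) := Nat.le_mul_of_pos_left _ hk
          have hx : k * (m + 1) = (k * (m + 1) - m) + m := by omega
          rw [hx, iterate_add_apply]
          exact hSclosed _ _ hm
        have h2 : f^[k * (m + 1)] v = v := by
          rw [iterate_mul]
          exact iterate_fixed hkv (m + 1)
        rw [h2] at h1
        exact hvS h1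
      · intro hv
        have hm : 0 < orderOf σ := orderOf_pos σ
        refine mem_cyc.2 ⟨orderOf σ, hm, ?_⟩
        rw [hiter _ v hv, pow_orderOf_eq_one σ]
        rfl
    exact key f hS hfS hfg


/-! ### E2 : codes ≃ doubly rooted trees -/

section Decode

variable (S : Finset (Fin n)) (σ : Equiv.Perm {x // x ∈ S})

/-- the enumeration of `S` determined by `σ`. -/
noncomputable def enumOf : Fin S.card ≃ {x // x ∈ S} :=
  (S.orderIsoOfFin rfl).toEquiv.trans σ

variable (g : Fin n → Fin n)

/-- decoded parent map. -/
noncomputable def dpar : Fin n → Fin n := fun v =>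
  if h : v ∈ S then
    (if h2 : ((enumOf S σ).symm ⟨v, h⟩ : ℕ) + 1 < S.card then
      (enumOf S σ ⟨((enumOf S σ).symm ⟨v, h⟩ : ℕ) + 1, h2⟩ : Fin n) else v)
  else g v

lemma dpar_not_mem {v : Fin n} (h : v ∉ S) : dpar S σ g v = g v := dif_neg h

lemma dpar_mem_eq (i : Fin S.card) :
    dpar S σ g (enumOf S σ i : Fin n) =
      if h2 : (i : ℕ) + 1 < S.card then (enumOf S σ ⟨(i : ℕ) + 1, h2⟩ : Fin n)
      else (enumOf S σ i : Fin n) := by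
  have hmem := (enumOf S σ i).2
  rw [dpar, dif_pos hmem]
  have h5 : (⟨(enumOf S σ i : Fin n), hmem⟩ : {x // x ∈ S}) = enumOf S σ i :=
    Subtype.ext rfl
  rw [h5, Equiv.symm_apply_apply]

lemma dpar_step (i : Fin S.card) (h2 : (i : ℕ) + 1 < S.card) :
    dpar S σ g (enumOf S σ i : Fin n) = (enumOf S σ ⟨(i : ℕ) + 1, h2⟩ : Fin n) := by
  rw [dpar_mem_eq, dif_pos h2]

lemma dpar_last (hc : S.card - 1 < S.card) :
    dpar S σ g (enumOf S σ ⟨S.card - 1, hc⟩ : Fin n) =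
      (enumOf S σ ⟨S.card - 1, hc⟩ : Fin n) := by
  have h2 : ¬ (((⟨S.card - 1, hc⟩ : Fin S.card) : ℕ) + 1 < S.card) := by
    simp only [Fin.val_mk]; omega
  rw [dpar_mem_eq, dif_neg h2]

lemma dpar_iter (hc : S.card - 1 < S.card) :
    ∀ (m : ℕ) (i : Fin S.card), (i : ℕ) + m = S.card - 1 →
      (dpar S σ g)^[m] (enumOf S σ i : Fin n) =
        (enumOf S σ ⟨S.card - 1, hc⟩ : Fin n) := by
  intro m
  induction m with
  | zero =>
    intro i hi
    simp only [iterate_zero, id_eq]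
    have h4 : i = ⟨S.card - 1, hc⟩ := Fin.ext (by simpa using hi)
    rw [h4]
  | succ m ih =>
    intro i hi
    have hlt := i.isLt
    have h2 : (i : ℕ) + 1 < S.card := by omega
    rw [iterate_succ_apply, dpar_step S σ g i h2]
    exact ih ⟨(i : ℕ) + 1, h2⟩ (by simp only [Fin.val_mk]; omega)

lemma dpar_reach (hc : S.card - 1 < S.card)
    (hgev : ∀ v, ∃ k, g^[k] v ∈ S) (v : Fin n) :
    ∃ k, (dpar S σ g)^[k] v = (enumOf S σ ⟨S.card - 1, hc⟩ : Fin n) := by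
  have hmemS : ∀ w (h : w ∈ S), ∃ k, (dpar S σ g)^[k] w =
      (enumOf S σ ⟨S.card - 1, hc⟩ : Fin n) := by
    intro w h
    set i := (enumOf S σ).symm ⟨w, h⟩ with hi
    have hw : (enumOf S σ i : Fin n) = w := by rw [hi, Equiv.apply_symm_apply]
    refine ⟨S.card - 1 - (i : ℕ), ?_⟩
    rw [← hw]
    exact dpar_iter S σ g hc _ i (by have := i.isLt; omega)
  by_cases h : v ∈ S
  · exact hmemS v h
  · obtain ⟨m, hm⟩ := hgev v
    obtain ⟨t, ht⟩ := until_mem (fun w hw => dpar_not_mem S σ g hw) m v hm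
    obtain ⟨k, hk⟩ := hmemS _ ht
    exact ⟨k + t, by rw [iterate_add_apply, hk]⟩

end Decode

section Encode

variable {b : Fin n} {p : Fin n → Fin n}

lemma enc_inj (hre : ∀ v, ∃ k, p^[k] v = b) (a : Fin n) :
    ∀ i j : ℕ, i ≤ Nat.find (hre a) → j ≤ Nat.find (hre a) →
      p^[i] a = p^[j] a → i = j := by
  have key : ∀ i j : ℕ, i < j → j ≤ Nat.find (hre a) → p^[i] a ≠ p^[j] a := by
    intro i j hij hj hEq
    have h1 : p^[Nat.find (hre a) - j + i] a = b := by
      rw [iterate_add_apply, hEq, ← iterate_add_apply,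
        Nat.sub_add_cancel hj]
      exact Nat.find_spec (hre a)
    exact Nat.find_min (hre a) (by omega) h1
  intro i j hi hj hEq
  rcases lt_trichotomy i j with h | h | h
  · exact absurd hEq (key i j h hj)
  · exact h
  · exact absurd hEq.symm (key j i h hi)

/-- vertex set of the path from `a` to `b`. -/
noncomputable def pathSet (hre : ∀ v, ∃ k, p^[k] v = b) (a : Fin n) : Finset (Fin n) :=
  Finset.image (fun i : Fin (Nat.find (hre a) + 1) => p^[(i : ℕ)] a) Finset.univ

lemma mem_pathSet (hre : ∀ v, ∃ k, p^[k] v = b) (a : Fin n) {i : ℕ}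
    (hi : i ≤ Nat.find (hre a)) : p^[i] a ∈ pathSet hre a :=
  Finset.mem_image.2 ⟨⟨i, by omega⟩, Finset.mem_univ _, rfl⟩

lemma b_mem_pathSet (hre : ∀ v, ∃ k, p^[k] v = b) (a : Fin n) : b ∈ pathSet hre a := by
  have := mem_pathSet hre a (le_refl (Nat.find (hre a)))
  rwa [Nat.find_spec (hre a)] at this

lemma card_pathSet (hre : ∀ v, ∃ k, p^[k] v = b) (a : Fin n) :
    (pathSet hre a).card = Nat.find (hre a) + 1 := by
  rw [pathSet, Finset.card_image_of_injective _ ?_, Finset.card_univ, Fintype.card_fin]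
  intro i j hEq
  exact Fin.ext (enc_inj hre a _ _ (by omega) (by omega) hEq)

/-- enumeration of the path set. -/
noncomputable def pathEnum (hre : ∀ v, ∃ k, p^[k] v = b) (a : Fin n) :
    Fin (pathSet hre a).card ≃ {x // x ∈ pathSet hre a} := by
  refine Equiv.ofBijective
    (fun i => ⟨p^[(i : ℕ)] a, mem_pathSet hre a (by
      have h1 := i.isLt; have h2 := card_pathSet hre a; omega)⟩) ?_
  rw [Fintype.bijective_iff_injective_and_card]
  constructor
  · intro i j hEq
    have hi := i.isLt; have hj := j.isLt
    have h2 := card_pathSet hre a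
    exact Fin.ext (enc_inj hre a _ _ (by omega) (by omega) (by
      simpa [Subtype.ext_iff] using hEq))
  · rw [Fintype.card_coe, Fintype.card_fin]

lemma coe_pathEnum (hre : ∀ v, ∃ k, p^[k] v = b) (a : Fin n)
    (i : Fin (pathSet hre a).card) : (pathEnum hre a i : Fin n) = p^[(i : ℕ)] a := rfl

/-- the permutation encoding the path order. -/
noncomputable def pathPerm (hre : ∀ v, ∃ k, p^[k] v = b) (a : Fin n) :
    Equiv.Perm {x // x ∈ pathSet hre a} :=
  ((pathSet hre a).orderIsoOfFin rfl).toEquiv.symm.trans (pathEnum hre a)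

lemma enumOf_pathPerm (hre : ∀ v, ∃ k, p^[k] v = b) (a : Fin n) :
    enumOf (pathSet hre a) (pathPerm hre a) = pathEnum hre a := by
  refine Equiv.ext fun i => ?_
  rw [enumOf, pathPerm]
  simp

/-- the attached forest. -/
noncomputable def pathForest (hre : ∀ v, ∃ k, p^[k] v = b) (a : Fin n) : Fin n → Fin n :=
  fun v => if v ∈ pathSet hre a then v else p v

lemma pathForest_spec (hpb : p b = b) (hre : ∀ v, ∃ k, p^[k] v = b) (a : Fin n) :
    (∀ v, pathForest hre a v = v ↔ v ∈ pathSet hre a) ∧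
      ∀ v, ∃ k, (pathForest hre a)^[k] v ∈ pathSet hre a := by
  constructor
  · intro v
    by_cases h : v ∈ pathSet hre a
    · simp [pathForest, h]
    · simp only [pathForest, if_neg h]
      refine ⟨fun hv => ?_, fun hv => absurd hv h⟩
      exfalso
      obtain ⟨k, hk⟩ := hre v
      rw [iterate_fixed hv] at hk
      exact h (hk ▸ b_mem_pathSet hre a)
  · intro v
    obtain ⟨k, hk⟩ := hre v
    exact until_mem (fun w hw => if_neg hw) k v (by rw [hk]; exact b_mem_pathSet hre a)

/-- encode a doubly rooted tree as a code. -/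
noncomputable def encodeFun (x : Σ b : Fin n, Rooted n b × Fin n) : Code n :=
  ⟨pathSet x.2.1.2.2 x.2.2, pathPerm x.2.1.2.2 x.2.2,
    ⟨pathForest x.2.1.2.2 x.2.2,
      (pathForest_spec x.2.1.2.1 x.2.1.2.2 x.2.2).1,
      (pathForest_spec x.2.1.2.1 x.2.1.2.2 x.2.2).2⟩⟩

end Encode


/-! ### assembling E2 -/

lemma code_card_pos (hn : 0 < n) (c : Code n) : 0 < c.1.card := by
  obtain ⟨k, hk⟩ := c.2.2.2.2 ⟨0, hn⟩
  exact Finset.card_pos.2 ⟨_, hk⟩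

noncomputable def decodeFun (hn : 0 < n) (c : Code n) : Σ b : Fin n, Rooted n b × Fin n :=
  ⟨(enumOf c.1 c.2.1 ⟨c.1.card - 1, Nat.sub_lt (code_card_pos hn c) one_pos⟩ : Fin n),
    ⟨⟨dpar c.1 c.2.1 c.2.2.1,
      dpar_last c.1 c.2.1 c.2.2.1 _,
      dpar_reach c.1 c.2.1 c.2.2.1 _ c.2.2.2.2⟩,
      (enumOf c.1 c.2.1 ⟨0, code_card_pos hn c⟩ : Fin n)⟩⟩

lemma rooted_sigma_ext {b b' : Fin n} {pf pf' : Fin n → Fin n}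
    {h1 : pf b = b ∧ ∀ v, ∃ k, pf^[k] v = b} {h1' : pf' b' = b' ∧ ∀ v, ∃ k, pf'^[k] v = b'}
    {a a' : Fin n}
    (hb : b = b') (hp : pf = pf') (ha : a = a') :
    (⟨b, ⟨pf, h1⟩, a⟩ : Σ v : Fin n, Rooted n v × Fin n) = ⟨b', ⟨pf', h1'⟩, a'⟩ := by
  subst hb
  exact congrArg _ (Prod.ext (Subtype.ext hp) ha)

lemma code_ext {S S' : Finset (Fin n)} (hS : S = S')
    {σ : Equiv.Perm {x // x ∈ S}} {σ' : Equiv.Perm {x // x ∈ S'}}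
    {g : Forests n S} {g' : Forests n S'}
    (hσ : ∀ (i : ℕ) (hi : i < S.card) (hi' : i < S'.card),
      (enumOf S σ ⟨i, hi⟩ : Fin n) = (enumOf S' σ' ⟨i, hi'⟩ : Fin n))
    (hg : g.1 = g'.1) : (⟨S, σ, g⟩ : Code n) = ⟨S', σ', g'⟩ := by
  subst hS
  have henum : enumOf S σ = enumOf S σ' :=
    Equiv.ext fun i => Subtype.ext (hσ i.1 i.2 i.2)
  have hσσ : σ = σ' := by
    have e1 : σ = (S.orderIsoOfFin rfl).toEquiv.symm.trans (enumOf S σ) := by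
      refine Equiv.ext fun v => ?_
      simp [enumOf]
    have e2 : σ' = (S.orderIsoOfFin rfl).toEquiv.symm.trans (enumOf S σ') := by
      refine Equiv.ext fun v => ?_
      simp [enumOf]
    rw [e1, e2, henum]
  exact Sigma.ext rfl (heq_of_eq (Prod.ext hσσ (Subtype.ext hg)))

lemma decode_encode (hn : 0 < n) (x : Σ b : Fin n, Rooted n b × Fin n) :
    decodeFun hn (encodeFun x) = x := by
  obtain ⟨b, ⟨⟨p, hpb, hre⟩, a⟩⟩ := x
  have hS := card_pathSet hre a
  dsimp only [decodeFun, encodeFun]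
  refine rooted_sigma_ext ?_ ?_ ?_
  · -- the recovered root is b
    rw [enumOf_pathPerm, coe_pathEnum]
    simp only [Fin.val_mk]
    rw [hS, Nat.add_sub_cancel]
    exact Nat.find_spec (hre a)
  · -- the recovered parent map is p
    funext v
    by_cases h : v ∈ pathSet hre a
    · obtain ⟨i, -, hiv⟩ := Finset.mem_image.1 h
      have hi := i.isLt
      have hI : (i : ℕ) < (pathSet hre a).card := by omega
      have hEI : (enumOf _ (pathPerm hre a) ⟨(i : ℕ), hI⟩ : Fin n) = v := by
        rw [enumOf_pathPerm, coe_pathEnum]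
        exact hiv
      rw [← hEI, dpar_mem_eq]
      by_cases h2 : ((⟨(i : ℕ), hI⟩ : Fin (pathSet hre a).card) : ℕ) + 1 < (pathSet hre a).card
      · rw [dif_pos h2, enumOf_pathPerm, coe_pathEnum, coe_pathEnum]
        simp only [Fin.val_mk]
        rw [iterate_succ_apply']
      · rw [dif_neg h2]
        simp only [Fin.val_mk] at h2
        have hieq : (i : ℕ) = Nat.find (hre a) := by omega
        have hb2 : (enumOf _ (pathPerm hre a) ⟨(i : ℕ), hI⟩ : Fin n) = b := by
          rw [enumOf_pathPerm, coe_pathEnum]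
          simp only [Fin.val_mk, hieq]
          exact Nat.find_spec (hre a)
        rw [hb2, hpb]
    · rw [dpar_not_mem _ _ _ h]
      simp [pathForest, if_neg h]
  · -- the recovered mark is a
    rw [enumOf_pathPerm, coe_pathEnum]
    simp

lemma encode_decode_aux (S : Finset (Fin n)) (σ : Equiv.Perm {x // x ∈ S})
    (g : Fin n → Fin n) (hgfix : ∀ v, g v = v ↔ v ∈ S) (hgev : ∀ v, ∃ k, g^[k] v ∈ S)
    (hc0 : 0 < S.card) (hc : S.card - 1 < S.card)
    (p : Fin n → Fin n) (hp : p = dpar S σ g)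
    (b : Fin n) (hb : b = (enumOf S σ ⟨S.card - 1, hc⟩ : Fin n))
    (hre : ∀ v, ∃ k, p^[k] v = b)
    (a : Fin n) (ha : a = (enumOf S σ ⟨0, hc0⟩ : Fin n))
    (G : Forests n (pathSet hre a)) (hG : G.1 = pathForest hre a) :
    (⟨pathSet hre a, pathPerm hre a, G⟩ : Code n) = ⟨S, σ, ⟨g, hgfix, hgev⟩⟩ := by
  have f1 : ∀ (j : ℕ) (hj : j < S.card), p^[j] a = (enumOf S σ ⟨j, hj⟩ : Fin n) := by
    intro j
    induction j with
    | zero => intro hj; simp [ha]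
    | succ j ih =>
      intro hj
      have hj' : j < S.card := by omega
      rw [iterate_succ_apply', ih hj', hp]
      exact dpar_step S σ g ⟨j, hj'⟩ (by simpa using hj)
  have f2 : Nat.find (hre a) = S.card - 1 := by
    rw [Nat.find_eq_iff]
    constructor
    · rw [f1 _ hc, hb]
    · intro j hj hjb
      have hjS : j < S.card := by omega
      have h4 : (enumOf S σ ⟨j, hjS⟩ : Fin n) = (enumOf S σ ⟨S.card - 1, hc⟩ : Fin n) :=
        ((f1 j hjS).symm.trans hjb).trans hb
      have h5 := (enumOf S σ).injective (Subtype.ext h4)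
      have h6 : j = S.card - 1 := by
        simpa using congrArg Fin.val h5
      omega
  have f3 : pathSet hre a = S := by
    ext x
    constructor
    · intro hx
      obtain ⟨i, -, hix⟩ := Finset.mem_image.1 hx
      have hi := i.isLt
      have hiS : (i : ℕ) < S.card := by omega
      have hix' : (enumOf S σ ⟨(i : ℕ), hiS⟩ : Fin n) = x := (f1 _ hiS).symm.trans hix
      rw [← hix']
      exact (enumOf S σ ⟨(i : ℕ), hiS⟩).2
    · intro hx
      have hile : ((enumOf S σ).symm ⟨x, hx⟩ : ℕ) ≤ Nat.find (hre a) := by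
        have := ((enumOf S σ).symm ⟨x, hx⟩).isLt
        omega
      have h7 := mem_pathSet hre a hile
      rwa [f1 _ ((enumOf S σ).symm ⟨x, hx⟩).isLt, Fin.eta, Equiv.apply_symm_apply] at h7
  refine code_ext f3 ?_ ?_
  · intro i hi hi'
    rw [enumOf_pathPerm, coe_pathEnum]
    simp only [Fin.val_mk]
    exact f1 i hi'
  · funext v
    rw [hG]
    show (if v ∈ pathSet hre a then v else p v) = g v
    by_cases h : v ∈ S
    · rw [if_pos (f3.symm ▸ h)]
      exact ((hgfix v).2 h).symm
    · rw [if_neg (by rw [f3]; exact h), hp]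
      exact dpar_not_mem S σ g h

lemma encode_decode (hn : 0 < n) (c : Code n) : encodeFun (decodeFun hn c) = c := by
  obtain ⟨S, σ, g⟩ := c
  obtain ⟨g, hgfix, hgev⟩ := g
  dsimp only [decodeFun, encodeFun]
  exact encode_decode_aux S σ g hgfix hgev _ _ _ rfl _ rfl _ _ rfl _ rfl

/-- E2 : codes are doubly rooted trees. -/
noncomputable def E2 (hn : 0 < n) : Code n ≃ Σ b : Fin n, Rooted n b × Fin n where
  toFun := decodeFun hn
  invFun := encodeFun
  left_inv := encode_decode hn
  right_inv := decode_encode hn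

/-! ### changing the root -/

lemma conj_iter (e : Equiv.Perm (Fin n)) (p : Fin n → Fin n) :
    ∀ (k : ℕ) (v : Fin n), (⇑e ∘ p ∘ ⇑e.symm)^[k] v = e (p^[k] (e.symm v)) := by
  intro k
  induction k with
  | zero => intro v; simp
  | succ k ih =>
    intro v
    rw [iterate_succ_apply, ih]
    simp only [comp_apply, Equiv.symm_apply_apply, ← iterate_succ_apply]

lemma conj_rooted (e : Equiv.Perm (Fin n)) {b : Fin n} {p : Fin n → Fin n}
    (hpb : p b = b) (hre : ∀ v, ∃ k, p^[k] v = b) :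
    ((⇑e ∘ p ∘ ⇑e.symm) (e b) = e b) ∧ ∀ v, ∃ k, (⇑e ∘ p ∘ ⇑e.symm)^[k] v = e b := by
  constructor
  · simp [hpb]
  · intro v
    obtain ⟨k, hk⟩ := hre (e.symm v)
    exact ⟨k, by rw [conj_iter, hk]⟩

noncomputable def rootedEquiv (b c : Fin n) : Rooted n b ≃ Rooted n c where
  toFun p := ⟨⇑(Equiv.swap b c) ∘ p.1 ∘ ⇑(Equiv.swap b c).symm, by
    have h := (conj_rooted (Equiv.swap b c) p.2.1 p.2.2).1
    rwa [Equiv.swap_apply_left] at h, by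
    have h := (conj_rooted (Equiv.swap b c) p.2.1 p.2.2).2
    rwa [Equiv.swap_apply_left] at h⟩
  invFun p := ⟨⇑(Equiv.swap c b) ∘ p.1 ∘ ⇑(Equiv.swap c b).symm, by
    have h := (conj_rooted (Equiv.swap c b) p.2.1 p.2.2).1
    rwa [Equiv.swap_apply_left] at h, by
    have h := (conj_rooted (Equiv.swap c b) p.2.1 p.2.2).2
    rwa [Equiv.swap_apply_left] at h⟩
  left_inv p := by
    refine Subtype.ext (funext fun v => ?_)
    simp [Equiv.swap_comm c b]
  right_inv p := by
    refine Subtype.ext (funext fun v => ?_)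
    simp [Equiv.swap_comm c b]

instance (b : Fin n) : Finite (Rooted n b) := by
  unfold Rooted
  infer_instance

/-! ### counting rooted trees -/

theorem card_rooted (n : ℕ) [NeZero n] (hn : 2 ≤ n) :
    Nat.card (Rooted n (0 : Fin n)) = n ^ (n - 2) := by
  have h0 : 0 < n := by omega
  have e : (Fin n → Fin n) ≃ (Fin n × (Rooted n (0 : Fin n) × Fin n)) :=
    (E1 n).trans ((E2 h0).trans
      ((Equiv.sigmaCongrRight fun b =>
        Equiv.prodCongr (rootedEquiv b (0 : Fin n)) (Equiv.refl (Fin n))).trans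
        (Equiv.sigmaEquivProd (Fin n) (Rooted n (0 : Fin n) × Fin n))))
  have hcard := Nat.card_congr e
  rw [Nat.card_prod, Nat.card_prod] at hcard
  have hfun : Nat.card (Fin n → Fin n) = n ^ n := by
    simp [Nat.card_eq_fintype_card]
  have hfin : Nat.card (Fin n) = n := by simp
  rw [hfun, hfin] at hcard
  set R := Nat.card (Rooted n (0 : Fin n)) with hR
  have key : n ^ n = n ^ (n - 2) * n ^ 2 := by
    rw [← pow_add]
    congr 1
    omega
  have h2 : R * n ^ 2 = n ^ (n - 2) * n ^ 2 := by
    rw [← key, hcard]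
    ring
  exact Nat.eq_of_mul_eq_mul_right (by positivity) h2

open SimpleGraph


section TreePart
open SimpleGraph Walk

variable {n : ℕ} [NeZero n]

/-- graph of a parent map: edges `v — p v` for `v ≠ 0`. -/
def pGraph (p : Fin n → Fin n) : SimpleGraph (Fin n) :=
  SimpleGraph.fromRel (fun x y => x ≠ 0 ∧ p x = y)

lemma pGraph_adj {p : Fin n → Fin n} {x y : Fin n} :
    (pGraph p).Adj x y ↔ x ≠ y ∧ ((x ≠ 0 ∧ p x = y) ∨ (y ≠ 0 ∧ p y = x)) :=
  SimpleGraph.fromRel_adj _ x y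

variable {p : Fin n → Fin n} (hre : ∀ v, ∃ k, p^[k] v = 0)

include hre

/-- height of a vertex: distance to the root. -/
noncomputable def hgt (hre : ∀ v, ∃ k, p^[k] v = 0) (v : Fin n) : ℕ := Nat.find (hre v)

lemma hgt_zero : hgt hre 0 = 0 := by
  simp [hgt, Nat.find_eq_zero]

lemma p_ne_self {v : Fin n} (hv : v ≠ 0) : p v ≠ v := by
  intro h
  obtain ⟨k, hk⟩ := hre v
  rw [Function.iterate_fixed h] at hk
  exact hv hk

lemma pGraph_adj_parent {v : Fin n} (hv : v ≠ 0) : (pGraph p).Adj v (p v) :=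
  pGraph_adj.2 ⟨(p_ne_self hre hv).symm, Or.inl ⟨hv, rfl⟩⟩

lemma hgt_parent {v : Fin n} (hv : v ≠ 0) : hgt hre (p v) + 1 = hgt hre v := by
  have h1 : p^[hgt hre v] v = 0 := Nat.find_spec (hre v)
  have hpos : 0 < hgt hre v := by
    rcases Nat.eq_zero_or_pos (hgt hre v) with h | h
    · rw [h] at h1; simp at h1; exact absurd h1 hv
    · exact h
  have h2 : p^[hgt hre v - 1] (p v) = 0 := by
    rw [← Function.iterate_succ_apply]
    show p^[hgt hre v - 1 + 1] v = 0
    have h2' : (hgt hre v - 1) + 1 = hgt hre v := by omega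
    rw [h2']
    exact h1
  have h3 : hgt hre (p v) ≤ hgt hre v - 1 := Nat.find_le h2
  have h4 : p^[hgt hre (p v) + 1] v = 0 := by
    rw [Function.iterate_succ_apply]
    exact Nat.find_spec (hre (p v))
  have h5 : hgt hre v ≤ hgt hre (p v) + 1 := Nat.find_le h4
  omega

lemma hgt_adj {x y : Fin n} (hadj : (pGraph p).Adj x y) :
    hgt hre y + 1 = hgt hre x ∨ hgt hre x + 1 = hgt hre y := by
  rcases pGraph_adj.1 hadj with ⟨-, ⟨hx0, hpx⟩ | ⟨hy0, hpy⟩⟩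
  · left; rw [← hpx]; exact hgt_parent hre hx0
  · right; rw [← hpy]; exact hgt_parent hre hy0

lemma pGraph_reach (v : Fin n) : (pGraph p).Reachable v 0 := by
  obtain ⟨k, hk⟩ := hre v
  induction k generalizing v with
  | zero => rw [Function.iterate_zero, id] at hk; exact hk ▸ Reachable.refl _
  | succ k ih =>
    by_cases hv : v = 0
    · exact hv ▸ Reachable.refl _
    · exact ((pGraph_adj_parent hre hv).reachable).trans
        (ih (p v) (by rwa [Function.iterate_succ_apply] at hk))

lemma pGraph_connected : (pGraph p).Connected := by
  rw [SimpleGraph.connected_iff]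
  exact ⟨fun u v => (pGraph_reach hre u).trans (pGraph_reach hre v).symm,
    ⟨0⟩⟩

lemma pGraph_no_cycle (u' : Fin n) (d : (pGraph p).Walk u' u') (hdc : d.IsCycle)
    (hmax : ∀ x ∈ d.support, hgt hre x ≤ hgt hre u') : False := by
  have h3 := hdc.three_le_length
  cases d with
  | nil => exact hdc.ne_nil rfl
  | cons hadj1 d' =>
    rename_i x
    have hxneu : u' ≠ x := hadj1.ne
    have hqpath : d'.reverse.IsPath := ((Walk.cons_isCycle_iff _ _).1 hdc).1.reverse
    have hqnil : ¬ d'.reverse.Nil := Walk.not_nil_of_ne hxneu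
    set y := d'.reverse.getVert 1 with hy
    have hadj2 : (pGraph p).Adj u' y := d'.reverse.adj_snd hqnil
    have hxy : x ≠ y := by
      intro hEq
      have htail : d'.reverse.tail.IsPath := hqpath.tail
      have h5 : d'.reverse.tail.length = 0 := by
        have h6 : (d'.reverse.tail.copy hEq.symm rfl).IsPath := by rwa [Walk.isPath_copy]
        have h7 : d'.reverse.tail.copy hEq.symm rfl = Walk.nil := Walk.isPath_iff_eq_nil.1 h6
        have h8 := congrArg Walk.length h7
        rwa [Walk.length_copy, Walk.length_nil] at h8
      have h8 : d'.reverse.length = 1 := by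
        have := Walk.length_tail_add_one hqnil
        omega
      have h9 : d'.length = 1 := by rwa [Walk.length_reverse] at h8
      rw [Walk.length_cons, h9] at h3
      omega
    have hxmem : x ∈ (Walk.cons hadj1 d').support := by
      rw [Walk.support_cons]
      exact List.mem_cons_of_mem _ (Walk.start_mem_support d')
    have hymem : y ∈ (Walk.cons hadj1 d').support := by
      rw [Walk.support_cons]
      refine List.mem_cons_of_mem _ ?_
      have h10 : y ∈ d'.reverse.support := Walk.mem_support_iff_exists_getVert.2 ⟨1, rfl, by
        have := Walk.not_nil_iff_lt_length.1 hqnil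
        omega⟩
      rwa [Walk.support_reverse, List.mem_reverse] at h10
    have hu'x : p u' = x := by
      rcases pGraph_adj.1 hadj1 with ⟨-, ⟨h1, h2⟩ | ⟨h1, h2⟩⟩
      · exact h2
      · exfalso
        have ha := hgt_parent hre h1
        rw [h2] at ha
        have hb := hmax x hxmem
        omega
    have hu'y : p u' = y := by
      rcases pGraph_adj.1 hadj2 with ⟨-, ⟨h1, h2⟩ | ⟨h1, h2⟩⟩
      · exact h2
      · exfalso
        have ha := hgt_parent hre h1
        rw [h2] at ha
        have hb := hmax y hymem
        omega
    exact hxy (hu'x ▸ hu'y)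

lemma pGraph_acyclic : (pGraph p).IsAcyclic := by
  intro u c hc
  obtain ⟨u', hu'mem, hu'max⟩ :
      ∃ u' ∈ c.support.toFinset, ∀ x ∈ c.support.toFinset, hgt hre x ≤ hgt hre u' := by
    refine Finset.exists_max_image _ _ ⟨u, ?_⟩
    simp [Walk.start_mem_support]
  rw [List.mem_toFinset] at hu'mem
  refine pGraph_no_cycle hre u' (c.rotate u' hu'mem) (hc.rotate hu'mem) ?_
  intro x hx
  rw [Walk.support_eq_cons] at hx
  rcases List.mem_cons.1 hx with rfl | hx
  · exact le_refl _
  · have h1 := (Walk.support_rotate c u' hu'mem).mem_iff.1 hx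
    exact hu'max x (List.mem_toFinset.2 (List.mem_of_mem_tail h1))

lemma pGraph_isTree : (pGraph p).IsTree :=
  ⟨pGraph_connected hre, pGraph_acyclic hre⟩

end TreePart

section TreeToMap

variable {n : ℕ} [NeZero n] {G : SimpleGraph (Fin n)} (hG : G.IsTree)

noncomputable def treePath (v : Fin n) : G.Walk v 0 :=
  (hG.existsUnique_path v 0).choose

lemma treePath_isPath (v : Fin n) : (treePath hG v).IsPath :=
  (hG.existsUnique_path v 0).choose_spec.1

lemma treePath_unique {v : Fin n} (w : G.Walk v 0) (hw : w.IsPath) : w = treePath hG v :=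
  (hG.existsUnique_path v 0).choose_spec.2 w hw

noncomputable def tpar : Fin n → Fin n := fun v => (treePath hG v).getVert 1

lemma treePath_zero : treePath hG 0 = Walk.nil :=
  (treePath_unique hG Walk.nil Walk.IsPath.nil).symm

lemma tpar_zero : tpar hG 0 = 0 := by
  rw [tpar, treePath_zero]
  rfl

lemma adj_tpar {v : Fin n} (hv : v ≠ 0) : G.Adj v (tpar hG v) :=
  (treePath hG v).adj_snd (Walk.not_nil_of_ne hv)

lemma treePath_tail {v : Fin n} (hv : v ≠ 0) :
    treePath hG (tpar hG v) = (treePath hG v).tail :=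
  (treePath_unique hG ((treePath hG v).tail)
    ((treePath_isPath hG v).tail)).symm

lemma tpar_length {v : Fin n} (hv : v ≠ 0) :
    (treePath hG (tpar hG v)).length + 1 = (treePath hG v).length := by
  rw [treePath_tail hG hv]
  exact Walk.length_tail_add_one (Walk.not_nil_of_ne hv)

lemma tpar_reach (v : Fin n) : ∃ k, (tpar hG)^[k] v = 0 := by
  suffices H : ∀ (m : ℕ) (v : Fin n), (treePath hG v).length = m →
      ∃ k, (tpar hG)^[k] v = 0 from H _ v rfl
  intro m
  induction m using Nat.strong_induction_on with
  | _ m ih =>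
    intro v hm
    by_cases hv : v = 0
    · exact ⟨0, hv⟩
    · obtain ⟨k, hk⟩ := ih ((treePath hG (tpar hG v)).length)
        (by have := tpar_length hG hv; omega) (tpar hG v) rfl
      exact ⟨k + 1, by rwa [Function.iterate_add_apply, Function.iterate_one]⟩

lemma step_of_not_mem {x y : Fin n} (hadj : G.Adj x y)
    (hx : x ∉ (treePath hG y).support) : x ≠ 0 ∧ tpar hG x = y := by
  have hpath : (Walk.cons hadj (treePath hG y)).IsPath :=
    (Walk.cons_isPath_iff _ _).2 ⟨treePath_isPath hG y, hx⟩
  have heq : Walk.cons hadj (treePath hG y) = treePath hG x := treePath_unique hG _ hpath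
  constructor
  · rintro rfl
    rw [treePath_zero] at heq
    simpa using congrArg Walk.length heq
  · rw [tpar, ← heq]
    simp [Walk.getVert_cons_succ]

lemma not_mem_of_mem {x y : Fin n} (hadj : G.Adj x y)
    (hx : x ∈ (treePath hG y).support) : y ∉ (treePath hG x).support := by
  intro hy
  have hdrop : (treePath hG y).dropUntil x hx = treePath hG x :=
    treePath_unique hG _ ((treePath_isPath hG y).dropUntil hx)
  have hnodup := (treePath_isPath hG y).support_nodup
  rw [← Walk.take_spec (treePath hG y) hx, Walk.support_append] at hnodup
  have hdisj := List.disjoint_of_nodup_append hnodup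
  have hyTake : y ∈ ((treePath hG y).takeUntil x hx).support := Walk.start_mem_support _
  have hyDrop : y ∈ ((treePath hG y).dropUntil x hx).support := by rwa [hdrop]
  rw [Walk.support_eq_cons] at hyDrop
  rcases List.mem_cons.1 hyDrop with h | h
  · exact hadj.ne' h
  · exact hdisj hyTake h

lemma pGraph_tpar : pGraph (tpar hG) = G := by
  ext x y
  rw [pGraph_adj]
  constructor
  · rintro ⟨hne, ⟨hx0, rfl⟩ | ⟨hy0, rfl⟩⟩
    · exact adj_tpar hG hx0
    · exact (adj_tpar hG hy0).symm
  · intro hadj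
    refine ⟨hadj.ne, ?_⟩
    by_cases hx : x ∈ (treePath hG y).support
    · right
      exact (step_of_not_mem hG hadj.symm (not_mem_of_mem hG hadj hx)).imp id id
    · left
      exact step_of_not_mem hG hadj hx

end TreeToMap

section RT2

variable {n : ℕ} [NeZero n] {p : Fin n → Fin n} (hre : ∀ v, ∃ k, p^[k] v = 0)

include hre in
lemma exists_nice_walk (v : Fin n) :
    ∃ w : (pGraph p).Walk v 0, w.IsPath ∧ (v ≠ 0 → w.getVert 1 = p v) ∧
      ∀ x ∈ w.support, hgt hre x ≤ hgt hre v := by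
  suffices H : ∀ (m : ℕ) (v : Fin n), hgt hre v = m →
      ∃ w : (pGraph p).Walk v 0, w.IsPath ∧ (v ≠ 0 → w.getVert 1 = p v) ∧
        ∀ x ∈ w.support, hgt hre x ≤ hgt hre v from H _ v rfl
  intro m
  induction m using Nat.strong_induction_on with
  | _ m ih =>
    intro v hm
    by_cases hv : v = 0
    · subst hv
      refine ⟨Walk.nil, Walk.IsPath.nil, fun h => absurd rfl h, ?_⟩
      intro x hx
      simp only [Walk.support_nil, List.mem_singleton] at hx
      exact hx ▸ le_refl _
    · have hlt : hgt hre (p v) < hgt hre v := by have := hgt_parent hre hv; omega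
      obtain ⟨w', h1, h2, h3⟩ := ih (hgt hre (p v)) (by omega) (p v) rfl
      refine ⟨Walk.cons (pGraph_adj_parent hre hv) w', ?_, ?_, ?_⟩
      · rw [Walk.cons_isPath_iff]
        refine ⟨h1, fun hmem => ?_⟩
        have := h3 v hmem
        omega
      · intro _
        simp [Walk.getVert_cons_succ]
      · intro x hx
        rw [Walk.support_cons] at hx
        rcases List.mem_cons.1 hx with rfl | hx
        · exact le_refl _
        · exact le_trans (h3 x hx) (by omega)

include hre in
lemma tpar_pGraph (hp0 : p 0 = 0) : tpar (pGraph_isTree hre) = p := by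
  funext v
  by_cases hv : v = 0
  · rw [hv, tpar_zero, hp0]
  · obtain ⟨w, hwpath, hwfst, -⟩ := exists_nice_walk hre v
    have hu := treePath_unique (pGraph_isTree hre) w hwpath
    rw [tpar, ← hu]
    exact hwfst hv

end RT2

noncomputable def treeRootedEquiv (n : ℕ) [NeZero n] :
    {G : SimpleGraph (Fin n) // G.IsTree} ≃ Rooted n 0 where
  toFun t := ⟨tpar t.2, tpar_zero t.2, fun v => tpar_reach t.2 v⟩
  invFun q := ⟨pGraph q.1, pGraph_isTree q.2.2⟩
  left_inv t := Subtype.ext (pGraph_tpar t.2)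
  right_inv q := Subtype.ext (tpar_pGraph q.2.2 q.2.1)


end CayleyAux


/-- **Cayley's formula**: for `n ≥ 2` there are exactly `n^(n-2)` labeled trees
(connected acyclic simple graphs) on the vertex set `{1, …, n}`. -/
theorem cayley_formula (n : ℕ) (hn : 2 ≤ n) :
    Nat.card {G : SimpleGraph (Fin n) // G.IsTree} = n ^ (n - 2) := by
  haveI : NeZero n := ⟨by omega⟩
  rw [Nat.card_congr (CayleyAux.treeRootedEquiv n)]
  exact CayleyAux.card_rooted n hn
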